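/- Let α ∈ (−1, 0) and let f : ℝ → ℝ be a nonnegative α-concave function with f ∈ L¹(ℝ). Then ∫_ℝ Δ_α f(x) dx ≤ 2 ∫_ℝ f(x) dx. -/

import Mathlib

open MeasureTheory Set
open scoped ENNReal

/-- The `α`-mean (for `α < 0`) of two nonnegative reals:
`M_α(a,b;t) = (t a^α + (1−t) b^α)^{1/α}` if `a, b > 0`, and `0` if `a = 0` or `b = 0`. -/
noncomputable def Malpha (α a b t : ℝ) : ℝ :=
  if 0 < a ∧ 0 < b then (t * a ^ α + (1 - t) * b ^ α) ^ (1 / α) else 0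

/-- A nonnegative `f : ℝ → ℝ` is `α`-concave if
`f(t x + (1−t) y) ≥ M_α(f(x), f(y); t)` for all `x, y` and `t ∈ [0,1]`. -/
def AlphaConcave1 (α : ℝ) (f : ℝ → ℝ) : Prop :=
  ∀ x y : ℝ, ∀ t : ℝ, t ∈ Set.Icc (0 : ℝ) 1 →
    Malpha α (f x) (f y) t ≤ f (t * x + (1 - t) * y)

/-- The `α`-difference function of `f : ℝ → ℝ`:
`Δ_α f(z) = sup { M_α(f(x), f(−y); 1/2) : (x+y)/2 = z }`, valued in `[0,∞]`. -/
noncomputable def diffAlpha1 (α : ℝ) (f : ℝ → ℝ) (z : ℝ) : ℝ≥0∞ :=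
  sSup {r : ℝ≥0∞ | ∃ x y : ℝ, (x + y) / 2 = z ∧
    r = ENNReal.ofReal (Malpha α (f x) (f (-y)) (1 / 2))}

section Aux

variable {α : ℝ}

private lemma base_pos (hα : α < 0) {a b t : ℝ} (ha : 0 < a) (hb : 0 < b)
    (ht : 0 ≤ t) (ht1 : t ≤ 1) : 0 < t * a ^ α + (1 - t) * b ^ α := by
  have hA := Real.rpow_pos_of_pos ha α
  have hB := Real.rpow_pos_of_pos hb α
  nlinarith [mul_nonneg ht (sub_nonneg.2 (min_le_left (a ^ α) (b ^ α))),
    mul_nonneg (sub_nonneg.2 ht1) (sub_nonneg.2 (min_le_right (a ^ α) (b ^ α))),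
    lt_min hA hB]

private lemma one_div_alpha_nonpos (hα : α < 0) : 1 / α ≤ 0 :=
  le_of_lt (one_div_neg.mpr hα)

private lemma Malpha_pos (hα : α < 0) {a b t : ℝ} (ha : 0 < a) (hb : 0 < b)
    (ht : 0 ≤ t) (ht1 : t ≤ 1) : 0 < Malpha α a b t := by
  rw [Malpha, if_pos ⟨ha, hb⟩]
  exact Real.rpow_pos_of_pos (base_pos hα ha hb ht ht1) _

private lemma Malpha_pos_elim {a b t : ℝ} (h : 0 < Malpha α a b t) : 0 < a ∧ 0 < b := by
  by_contra hc
  rw [Malpha, if_neg hc] at h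
  exact lt_irrefl 0 h

private lemma Malpha_mono (hα : α < 0) {a b a' b' t : ℝ} (ha : 0 < a) (hb : 0 < b)
    (haa' : a ≤ a') (hbb' : b ≤ b') (ht : 0 ≤ t) (ht1 : t ≤ 1) :
    Malpha α a b t ≤ Malpha α a' b' t := by
  have ha' : 0 < a' := lt_of_lt_of_le ha haa'
  have hb' : 0 < b' := lt_of_lt_of_le hb hbb'
  rw [Malpha, Malpha, if_pos ⟨ha, hb⟩, if_pos ⟨ha', hb'⟩]
  have h1 : a' ^ α ≤ a ^ α := Real.rpow_le_rpow_of_nonpos ha haa' hα.le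
  have h2 : b' ^ α ≤ b ^ α := Real.rpow_le_rpow_of_nonpos hb hbb' hα.le
  have hbase : t * a' ^ α + (1 - t) * b' ^ α ≤ t * a ^ α + (1 - t) * b ^ α :=
    add_le_add (mul_le_mul_of_nonneg_left h1 ht)
      (mul_le_mul_of_nonneg_left h2 (by linarith))
  exact Real.rpow_le_rpow_of_nonpos (base_pos hα ha' hb' ht ht1) hbase
    (one_div_alpha_nonpos hα)

private lemma Malpha_self (hα : α < 0) {a t : ℝ} (ha : 0 < a) : Malpha α a a t = a := by
  rw [Malpha, if_pos ⟨ha, ha⟩]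
  have h : t * a ^ α + (1 - t) * a ^ α = a ^ α := by ring
  rw [h, ← Real.rpow_mul ha.le, mul_one_div_cancel (ne_of_lt hα), Real.rpow_one]

private lemma Malpha_min_le (hα : α < 0) {a b t : ℝ} (ha : 0 < a) (hb : 0 < b)
    (ht : 0 ≤ t) (ht1 : t ≤ 1) : min a b ≤ Malpha α a b t := by
  have hm : 0 < min a b := lt_min ha hb
  have := Malpha_mono hα hm hm (min_le_left a b) (min_le_right a b) ht ht1
  rwa [Malpha_self hα hm] at this

private lemma Malpha_combine (hα : α < 0) {a₁ a₂ b₁ b₂ θ : ℝ}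
    (ha₁ : 0 < a₁) (ha₂ : 0 < a₂) (hb₁ : 0 < b₁) (hb₂ : 0 < b₂)
    (hθ : 0 ≤ θ) (hθ1 : θ ≤ 1) :
    min (Malpha α a₁ b₁ (1 / 2)) (Malpha α a₂ b₂ (1 / 2)) ≤
      Malpha α (Malpha α a₁ a₂ θ) (Malpha α b₁ b₂ θ) (1 / 2) := by
  have hinv := one_div_alpha_nonpos hα
  have hpa0 : 0 < θ * a₁ ^ α + (1 - θ) * a₂ ^ α := base_pos hα ha₁ ha₂ hθ hθ1
  have hpb0 : 0 < θ * b₁ ^ α + (1 - θ) * b₂ ^ α := base_pos hα hb₁ hb₂ hθ hθ1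
  have hc₁0 : 0 < (1 / 2 : ℝ) * a₁ ^ α + (1 - 1 / 2) * b₁ ^ α :=
    base_pos hα ha₁ hb₁ (by norm_num) (by norm_num)
  have hc₂0 : 0 < (1 / 2 : ℝ) * a₂ ^ α + (1 - 1 / 2) * b₂ ^ α :=
    base_pos hα ha₂ hb₂ (by norm_num) (by norm_num)
  have e1 : Malpha α a₁ a₂ θ = (θ * a₁ ^ α + (1 - θ) * a₂ ^ α) ^ (1 / α) := by
    rw [Malpha, if_pos ⟨ha₁, ha₂⟩]
  have e2 : Malpha α b₁ b₂ θ = (θ * b₁ ^ α + (1 - θ) * b₂ ^ α) ^ (1 / α) := by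
    rw [Malpha, if_pos ⟨hb₁, hb₂⟩]
  have e3 : Malpha α a₁ b₁ (1 / 2) = ((1 / 2 : ℝ) * a₁ ^ α + (1 - 1 / 2) * b₁ ^ α) ^ (1 / α) := by
    rw [Malpha, if_pos ⟨ha₁, hb₁⟩]
  have e4 : Malpha α a₂ b₂ (1 / 2) = ((1 / 2 : ℝ) * a₂ ^ α + (1 - 1 / 2) * b₂ ^ α) ^ (1 / α) := by
    rw [Malpha, if_pos ⟨ha₂, hb₂⟩]
  have hPpos := Real.rpow_pos_of_pos hpa0 (1 / α)
  have hQpos := Real.rpow_pos_of_pos hpb0 (1 / α)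
  have e5 : Malpha α ((θ * a₁ ^ α + (1 - θ) * a₂ ^ α) ^ (1 / α))
      ((θ * b₁ ^ α + (1 - θ) * b₂ ^ α) ^ (1 / α)) (1 / 2)
      = (θ * ((1 / 2 : ℝ) * a₁ ^ α + (1 - 1 / 2) * b₁ ^ α)
          + (1 - θ) * ((1 / 2 : ℝ) * a₂ ^ α + (1 - 1 / 2) * b₂ ^ α)) ^ (1 / α) := by
    rw [Malpha, if_pos ⟨hPpos, hQpos⟩, ← Real.rpow_mul hpa0.le, ← Real.rpow_mul hpb0.le,
      one_div_mul_cancel (ne_of_lt hα), Real.rpow_one, Real.rpow_one]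
    congr 1
    ring
  rw [e1, e2, e3, e4, e5]
  set c₁ := (1 / 2 : ℝ) * a₁ ^ α + (1 - 1 / 2) * b₁ ^ α with hc₁
  set c₂ := (1 / 2 : ℝ) * a₂ ^ α + (1 - 1 / 2) * b₂ ^ α with hc₂
  rcases le_total c₁ c₂ with h | h
  · have h1 : θ * c₁ + (1 - θ) * c₂ ≤ c₂ := by nlinarith [mul_nonneg hθ (sub_nonneg.2 h)]
    have h2 : c₁ ≤ θ * c₁ + (1 - θ) * c₂ := by
      nlinarith [mul_nonneg (sub_nonneg.2 hθ1) (sub_nonneg.2 h)]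
    exact le_trans (min_le_right _ _)
      (Real.rpow_le_rpow_of_nonpos (lt_of_lt_of_le hc₁0 h2) h1 hinv)
  · have h1 : θ * c₁ + (1 - θ) * c₂ ≤ c₁ := by
      nlinarith [mul_nonneg (sub_nonneg.2 hθ1) (sub_nonneg.2 h)]
    have h2 : c₂ ≤ θ * c₁ + (1 - θ) * c₂ := by nlinarith [mul_nonneg hθ (sub_nonneg.2 h)]
    exact le_trans (min_le_left _ _)
      (Real.rpow_le_rpow_of_nonpos (lt_of_lt_of_le hc₂0 h2) h1 hinv)

/-- Key geometric lemma: if the `α`-mean of `f x` and `f (-y)` exceeds `s > 0`,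
then `|z| = |(x+y)/2|` is at most the measure of the superlevel set `{f > s}`. -/
private lemma key_bound (hα : α < 0) {f : ℝ → ℝ} (hf : AlphaConcave1 α f)
    {s z x y : ℝ} (hs : 0 < s) (hz : (x + y) / 2 = z)
    (hM : s < Malpha α (f x) (f (-y)) (1 / 2)) :
    ENNReal.ofReal |z| ≤ volume {w : ℝ | s < f w} := by
  have hab : 0 < f x ∧ 0 < f (-y) := by
    by_contra h
    rw [Malpha, if_neg h] at hM
    linarith
  obtain ⟨ha, hb⟩ := hab
  set w : ℝ := -y with hw
  set x₀ : ℝ := if f w ≤ f x then x else w with hx₀def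
  have h₀a : f x ≤ f x₀ := by
    rw [hx₀def]; split_ifs with h
    · exact le_refl _
    · exact le_of_not_ge h
  have h₀b : f w ≤ f x₀ := by
    rw [hx₀def]; split_ifs with h
    · exact h
    · exact le_refl _
  have h₀ : 0 < f x₀ := lt_of_lt_of_le ha h₀a
  have segA : ∀ u : ℝ, min x x₀ ≤ u → u ≤ max x x₀ → f x ≤ f u := by
    intro u h1 h2
    have hu : u ∈ segment ℝ x x₀ := by
      rw [segment_eq_Icc' x x₀]
      exact ⟨h1, h2⟩
    obtain ⟨p, q, hp, hq, hpq, rfl⟩ := hu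
    have hcv := hf x x₀ p ⟨hp, by linarith⟩
    have hmin : min (f x) (f x₀) ≤ Malpha α (f x) (f x₀) p :=
      Malpha_min_le hα ha h₀ hp (by linarith)
    have harg : p • x + q • x₀ = p * x + (1 - p) * x₀ := by
      simp only [smul_eq_mul]
      rw [show q = 1 - p by linarith]
    rw [harg]
    calc f x = min (f x) (f x₀) := (min_eq_left h₀a).symm
      _ ≤ Malpha α (f x) (f x₀) p := hmin
      _ ≤ f (p * x + (1 - p) * x₀) := hcv
  have segB : ∀ v : ℝ, min w x₀ ≤ v → v ≤ max w x₀ → f w ≤ f v := by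
    intro v h1 h2
    have hv : v ∈ segment ℝ w x₀ := by
      rw [segment_eq_Icc' w x₀]
      exact ⟨h1, h2⟩
    obtain ⟨p, q, hp, hq, hpq, rfl⟩ := hv
    have hcv := hf w x₀ p ⟨hp, by linarith⟩
    have hmin : min (f w) (f x₀) ≤ Malpha α (f w) (f x₀) p :=
      Malpha_min_le hα hb h₀ hp (by linarith)
    have harg : p • w + q • x₀ = p * w + (1 - p) * x₀ := by
      simp only [smul_eq_mul]
      rw [show q = 1 - p by linarith]
    rw [harg]
    calc f w = min (f w) (f x₀) := (min_eq_left h₀b).symm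
      _ ≤ Malpha α (f w) (f x₀) p := hmin
      _ ≤ f (p * w + (1 - p) * x₀) := hcv
  have hle1 : min x x₀ ≤ max x x₀ := min_le_max
  have hle2 : min w x₀ ≤ max w x₀ := min_le_max
  have hsub : Icc ((min x x₀ + min w x₀) / 2) ((max x x₀ + max w x₀) / 2)
      ⊆ {w' : ℝ | s < f w'} := by
    intro c hc
    obtain ⟨hc1, hc2⟩ := hc
    set d : ℝ := 2 * c - min x x₀ - min w x₀ with hd
    have hd0 : 0 ≤ d := by rw [hd]; linarith
    have hd1 : d ≤ (max x x₀ - min x x₀) + (max w x₀ - min w x₀) := by rw [hd]; linarith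
    set e : ℝ := min d (max x x₀ - min x x₀) with he
    have he0 : 0 ≤ e := le_min hd0 (by linarith)
    have heq1 : e ≤ max x x₀ - min x x₀ := min_le_right _ _
    have hed : e ≤ d := min_le_left _ _
    have hde : d - e ≤ max w x₀ - min w x₀ := by
      rcases le_total d (max x x₀ - min x x₀) with h | h
      · rw [he, min_eq_left h]; linarith
      · rw [he, min_eq_right h]; linarith
    set u : ℝ := min x x₀ + e with hu
    set v : ℝ := min w x₀ + (d - e) with hv
    have hfu : f x ≤ f u := segA u (by rw [hu]; linarith) (by rw [hu]; linarith)
    have hfv : f w ≤ f v := segB v (by rw [hv]; linarith) (by rw [hv]; linarith)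
    have hmid := hf u v (1 / 2) ⟨by norm_num, by norm_num⟩
    have hmono : Malpha α (f x) (f w) (1 / 2) ≤ Malpha α (f u) (f v) (1 / 2) :=
      Malpha_mono hα ha hb hfu hfv (by norm_num) (by norm_num)
    have hcu : (1 / 2 : ℝ) * u + (1 - 1 / 2) * v = c := by
      rw [hu, hv, hd]; ring
    show s < f c
    calc s < Malpha α (f x) (f w) (1 / 2) := hM
      _ ≤ Malpha α (f u) (f v) (1 / 2) := hmono
      _ ≤ f ((1 / 2 : ℝ) * u + (1 - 1 / 2) * v) := hmid
      _ = f c := by rw [hcu]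
  have hvol : ENNReal.ofReal ((max x x₀ + max w x₀) / 2 - (min x x₀ + min w x₀) / 2)
      ≤ volume {w' : ℝ | s < f w'} := by
    rw [← Real.volume_Icc]
    exact measure_mono hsub
  refine le_trans (ENNReal.ofReal_le_ofReal ?_) hvol
  have h1 : |x - w| ≤ |x - x₀| + |x₀ - w| := abs_sub_le x x₀ w
  have h2 : |z| = |x - w| / 2 := by
    have hxy : z = (x - w) / 2 := by rw [← hz, hw]; ring
    rw [hxy, abs_div, abs_two]
  have h3 : max x x₀ - min x x₀ = |x₀ - x| := max_sub_min_eq_abs x x₀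
  have h4 : max w x₀ - min w x₀ = |x₀ - w| := max_sub_min_eq_abs w x₀
  have h5 : |x₀ - x| = |x - x₀| := abs_sub_comm x₀ x
  linarith

private lemma diff_measurable (hα : α < 0) {f : ℝ → ℝ} (hf : AlphaConcave1 α f) :
    Measurable (diffAlpha1 α f) := by
  apply measurable_of_Ioi
  intro t
  have hconv : Convex ℝ (diffAlpha1 α f ⁻¹' Ioi t) := by
    intro z₁ hz₁ z₂ hz₂ p q hp hq hpq
    simp only [mem_preimage, mem_Ioi] at hz₁ hz₂ ⊢
    rw [diffAlpha1] at hz₁ hz₂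
    obtain ⟨r₁, hmem₁, hr₁⟩ := lt_sSup_iff.mp hz₁
    obtain ⟨r₂, hmem₂, hr₂⟩ := lt_sSup_iff.mp hz₂
    obtain ⟨x₁, y₁, hxy₁, rfl⟩ := hmem₁
    obtain ⟨x₂, y₂, hxy₂, rfl⟩ := hmem₂
    have hM₁ : 0 < Malpha α (f x₁) (f (-y₁)) (1 / 2) :=
      ENNReal.ofReal_pos.mp (lt_of_le_of_lt (zero_le : (0:ℝ≥0∞) ≤ t) hr₁)
    have hM₂ : 0 < Malpha α (f x₂) (f (-y₂)) (1 / 2) :=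
      ENNReal.ofReal_pos.mp (lt_of_le_of_lt (zero_le : (0:ℝ≥0∞) ≤ t) hr₂)
    obtain ⟨ha₁, hb₁⟩ := Malpha_pos_elim hM₁
    obtain ⟨ha₂, hb₂⟩ := Malpha_pos_elim hM₂
    have hp1 : p ≤ 1 := by linarith
    have hfx : Malpha α (f x₁) (f x₂) p ≤ f (p * x₁ + q * x₂) := by
      have h := hf x₁ x₂ p ⟨hp, hp1⟩
      rwa [show (1 : ℝ) - p = q by linarith] at h
    have hfy : Malpha α (f (-y₁)) (f (-y₂)) p ≤ f (-(p * y₁ + q * y₂)) := by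
      have h := hf (-y₁) (-y₂) p ⟨hp, hp1⟩
      rw [show (1 : ℝ) - p = q by linarith] at h
      rwa [show p * -y₁ + q * -y₂ = -(p * y₁ + q * y₂) by ring] at h
    have hcomb : min (Malpha α (f x₁) (f (-y₁)) (1 / 2)) (Malpha α (f x₂) (f (-y₂)) (1 / 2))
        ≤ Malpha α (f (p * x₁ + q * x₂)) (f (-(p * y₁ + q * y₂))) (1 / 2) :=
      le_trans (Malpha_combine hα ha₁ ha₂ hb₁ hb₂ hp hp1)
        (Malpha_mono hα (Malpha_pos hα ha₁ ha₂ hp hp1) (Malpha_pos hα hb₁ hb₂ hp hp1)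
          hfx hfy (by norm_num) (by norm_num))
    have hmem : ENNReal.ofReal
        (Malpha α (f (p * x₁ + q * x₂)) (f (-(p * y₁ + q * y₂))) (1 / 2)) ∈
        {r : ℝ≥0∞ | ∃ x y : ℝ, (x + y) / 2 = p • z₁ + q • z₂ ∧
          r = ENNReal.ofReal (Malpha α (f x) (f (-y)) (1 / 2))} := by
      refine ⟨p * x₁ + q * x₂, p * y₁ + q * y₂, ?_, rfl⟩
      rw [← hxy₁, ← hxy₂]
      simp only [smul_eq_mul]
      ring
    have hlift : t < ENNReal.ofReal (min (Malpha α (f x₁) (f (-y₁)) (1 / 2))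
        (Malpha α (f x₂) (f (-y₂)) (1 / 2))) := by
      rcases le_total (Malpha α (f x₁) (f (-y₁)) (1 / 2))
          (Malpha α (f x₂) (f (-y₂)) (1 / 2)) with h | h
      · rwa [min_eq_left h]
      · rwa [min_eq_right h]
    calc t < ENNReal.ofReal (min (Malpha α (f x₁) (f (-y₁)) (1 / 2))
          (Malpha α (f x₂) (f (-y₂)) (1 / 2))) := hlift
      _ ≤ ENNReal.ofReal
          (Malpha α (f (p * x₁ + q * x₂)) (f (-(p * y₁ + q * y₂))) (1 / 2)) :=
        ENNReal.ofReal_le_ofReal hcomb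
      _ ≤ diffAlpha1 α f (p • z₁ + q • z₂) := by
        rw [diffAlpha1]
        exact le_sSup hmem
  exact hconv.ordConnected.measurableSet

private lemma level_bound (hα : α < 0) {f : ℝ → ℝ} (hf : AlphaConcave1 α f)
    {s : ℝ} (hs : 0 < s) :
    volume {z : ℝ | ENNReal.ofReal s < diffAlpha1 α f z}
      ≤ 2 * volume {w : ℝ | s < f w} := by
  set m := volume {w : ℝ | s < f w} with hm
  by_cases htop : m = ⊤
  · rw [htop]
    simp
  · have hsub : {z : ℝ | ENNReal.ofReal s < diffAlpha1 α f z}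
        ⊆ Icc (-m.toReal) m.toReal := by
      intro z hz
      simp only [mem_setOf_eq] at hz
      rw [diffAlpha1] at hz
      obtain ⟨r, hmem, hr⟩ := lt_sSup_iff.mp hz
      obtain ⟨x, y, hxy, rfl⟩ := hmem
      have hsM : s < Malpha α (f x) (f (-y)) (1 / 2) := by
        by_contra hcon
        push_neg at hcon
        exact absurd (lt_of_lt_of_le hr (ENNReal.ofReal_le_ofReal hcon)) (lt_irrefl _)
      have hkey := key_bound hα hf hs hxy hsM
      rw [← hm, ← ENNReal.ofReal_toReal htop] at hkey
      have habs : |z| ≤ m.toReal :=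
        (ENNReal.ofReal_le_ofReal_iff ENNReal.toReal_nonneg).mp hkey
      exact abs_le.mp habs
    calc volume {z : ℝ | ENNReal.ofReal s < diffAlpha1 α f z}
        ≤ volume (Icc (-m.toReal) m.toReal) := measure_mono hsub
      _ = ENNReal.ofReal (m.toReal - -m.toReal) := Real.volume_Icc
      _ = ENNReal.ofReal (2 * m.toReal) := by norm_num [two_mul]
      _ = 2 * m := by
          rw [ENNReal.ofReal_mul (by norm_num : (0 : ℝ) ≤ 2), ENNReal.ofReal_ofNat,
            ENNReal.ofReal_toReal htop]

private lemma diff_ne_top (hα : α < 0) {f : ℝ → ℝ} (hf0 : ∀ x, 0 ≤ f x)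
    (hf : AlphaConcave1 α f) (hint : Integrable f) {z : ℝ} (hz : z ≠ 0) :
    diffAlpha1 α f z ≠ ⊤ := by
  set I := ∫⁻ a, ENNReal.ofReal (f a) with hI
  have hIfin : I ≠ ⊤ := by
    have h := hint.hasFiniteIntegral
    rw [hasFiniteIntegral_iff_norm] at h
    have : I = ∫⁻ a, ENNReal.ofReal ‖f a‖ := by
      apply lintegral_congr
      intro a
      rw [Real.norm_eq_abs, abs_of_nonneg (hf0 a)]
    rw [this]
    exact ne_of_lt h
  have h0 : 0 < |z| := abs_pos.mpr hz
  set s : ℝ := (I.toReal + 1) / |z| with hs_def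
  have hs : 0 < s := div_pos (by positivity) h0
  have hmlt : volume {w : ℝ | s < f w} < ENNReal.ofReal |z| := by
    by_contra hcon
    push_neg at hcon
    have hmark : ENNReal.ofReal s *
        volume {w : ℝ | ENNReal.ofReal s ≤ ENNReal.ofReal (f w)} ≤ I :=
      mul_meas_ge_le_lintegral₀
        (ENNReal.measurable_ofReal.comp_aemeasurable hint.aemeasurable) _
    have hsub2 : {w : ℝ | s < f w} ⊆ {w : ℝ | ENNReal.ofReal s ≤ ENNReal.ofReal (f w)} :=
      fun w hw => ENNReal.ofReal_le_ofReal (le_of_lt hw)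
    have hchain : ENNReal.ofReal s * ENNReal.ofReal |z| ≤ I :=
      le_trans (mul_le_mul_right (le_trans hcon (measure_mono hsub2)) _) hmark
    rw [← ENNReal.ofReal_mul hs.le] at hchain
    have hsz : s * |z| = I.toReal + 1 := div_mul_cancel₀ _ (ne_of_gt h0)
    rw [hsz, ENNReal.ofReal_add ENNReal.toReal_nonneg zero_le_one,
      ENNReal.ofReal_toReal hIfin, ENNReal.ofReal_one] at hchain
    exact absurd hchain (not_le.mpr (ENNReal.lt_add_right hIfin one_ne_zero))
  have hle : diffAlpha1 α f z ≤ ENNReal.ofReal s := by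
    rw [diffAlpha1]
    apply sSup_le
    rintro r ⟨x, y, hxy, rfl⟩
    apply ENNReal.ofReal_le_ofReal
    by_contra hcon
    push_neg at hcon
    exact absurd (key_bound hα hf hs hxy hcon) (not_le.mpr hmlt)
  exact ne_top_of_le_ne_top ENNReal.ofReal_ne_top hle

end Aux

/-- For `α ∈ (−1, 0)` and a nonnegative `α`-concave `f ∈ L¹(ℝ)`,
`∫ Δ_α f ≤ 2 ∫ f`. -/
theorem lintegral_diffAlpha1_le_two (α : ℝ) (hα₁ : -1 < α) (hα₂ : α < 0)
    (f : ℝ → ℝ) (hf0 : ∀ x, 0 ≤ f x) (hf : AlphaConcave1 α f)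
    (hint : Integrable f) :
    ∫⁻ x, diffAlpha1 α f x ≤ 2 * ∫⁻ x, ENNReal.ofReal (f x) := by
  have hmeas : Measurable (diffAlpha1 α f) := diff_measurable hα₂ hf
  have hzero : volume ({(0 : ℝ)} : Set ℝ) = 0 := measure_singleton 0
  have hne : ∀ z : ℝ, z ≠ 0 → diffAlpha1 α f z ≠ ⊤ :=
    fun z hz => diff_ne_top hα₂ hf0 hf hint hz
  have hcongr : ∫⁻ z, diffAlpha1 α f z
      = ∫⁻ z, ENNReal.ofReal ((diffAlpha1 α f z).toReal) := by
    apply lintegral_congr_ae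
    rw [Filter.eventuallyEq_iff_exists_mem]
    refine ⟨{z : ℝ | z ≠ 0}, ?_, fun z hz => (ENNReal.ofReal_toReal (hne z hz)).symm⟩
    rw [mem_ae_iff]
    convert hzero using 2
    ext z
    simp
  rw [hcongr,
    lintegral_eq_lintegral_meas_lt volume
      (Filter.Eventually.of_forall fun z => ENNReal.toReal_nonneg)
      hmeas.ennreal_toReal.aemeasurable,
    lintegral_eq_lintegral_meas_lt volume (Filter.Eventually.of_forall hf0)
      hint.aemeasurable,
    ← lintegral_const_mul' 2 _ ENNReal.ofNat_ne_top]
  apply lintegral_mono_ae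
  rw [ae_restrict_iff' measurableSet_Ioi]
  refine Filter.Eventually.of_forall fun s hs => ?_
  have hs0 : 0 < s := hs
  have hsub : {z : ℝ | s < (diffAlpha1 α f z).toReal}
      ⊆ {z : ℝ | ENNReal.ofReal s < diffAlpha1 α f z} ∪ {0} := by
    intro z hz
    by_cases h0 : z = 0
    · exact Or.inr (by simp [h0])
    · left
      simp only [mem_setOf_eq] at hz ⊢
      exact (ENNReal.ofReal_lt_iff_lt_toReal hs0.le (hne z h0)).mpr hz
  calc volume {z : ℝ | s < (diffAlpha1 α f z).toReal}
      ≤ volume ({z : ℝ | ENNReal.ofReal s < diffAlpha1 α f z} ∪ {0}) := measure_mono hsub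
    _ ≤ volume {z : ℝ | ENNReal.ofReal s < diffAlpha1 α f z} + volume ({(0 : ℝ)} : Set ℝ) :=
        measure_union_le _ _
    _ = volume {z : ℝ | ENNReal.ofReal s < diffAlpha1 α f z} := by rw [hzero, add_zero]
    _ ≤ 2 * volume {a : ℝ | s < f a} := level_bound hα₂ hf hs0
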